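/- Let n ≥ 1 and let D be the multiset in ℝ consisting of 2n−1 copies of 0 and one copy of 1. Then the optimal squared loss is L_D^⋆ = (2n−1)/(2n)², and for every choice of n points z₁,…,z_n from D, L_D((z₁+⋯+z_n)/n) ≥ (2n/(2n−1)) · L_D^⋆. -/

import Mathlib

theorem mean_estimation_lower_bound_example
    (n : ℕ) (hn : 1 ≤ n)
    (D : Multiset ℝ) (hD : D = Multiset.replicate (2*n - 1) (0:ℝ) + {(1:ℝ)})
    (L : ℝ → ℝ) (hL : ∀ h, L h = (D.map (fun z => (h - z)^2)).sum / D.card) :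
    (∀ h, ((2*n - 1 : ℕ) : ℝ) / (2*n)^2 ≤ L h) ∧
    (∃ h, L h = ((2*n - 1 : ℕ) : ℝ) / (2*n)^2) ∧
    (∀ z : Fin n → ℝ, (∀ i, z i ∈ D) →
      (2*n / (2*n - 1 : ℝ)) * (((2*n - 1 : ℕ) : ℝ) / (2*n)^2) ≤ L ((∑ i, z i) / n)) := by
  have hm : ((2*n - 1 : ℕ) : ℝ) = 2*(n:ℝ) - 1 := by
    push_cast [Nat.cast_sub (by omega : 1 ≤ 2*n)]; ring
  have hn1 : (1:ℝ) ≤ (n:ℝ) := by exact_mod_cast hn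
  have hnpos : (0:ℝ) < (n:ℝ) := by linarith
  have hL' : ∀ h, L h = ((2*(n:ℝ)-1) * h^2 + (h-1)^2) / (2*n) := by
    intro h
    rw [hL, hD]
    simp only [Multiset.map_add, Multiset.map_replicate, Multiset.map_singleton,
      Multiset.sum_add, Multiset.sum_replicate, Multiset.sum_singleton,
      Multiset.card_add, Multiset.card_replicate, Multiset.card_singleton]
    rw [show (2*n - 1 + 1 : ℕ) = 2*n by omega]
    rw [nsmul_eq_mul]
    push_cast [Nat.cast_sub (by omega : 1 ≤ 2*n)]
    field_simp
    ring
  refine ⟨?_, ⟨1/(2*n), ?_⟩, ?_⟩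
  · intro h
    rw [hL', hm]
    rw [div_le_div_iff₀ (by positivity) (by positivity)]
    nlinarith [sq_nonneg (2*(n:ℝ)*h - 1), sq_nonneg h, sq_nonneg (h-1)]
  · rw [hL', hm]
    field_simp
    ring
  · intro z hz
    have hz' : ∀ i, z i = 0 ∨ z i = 1 := by
      intro i
      have := hz i
      rw [hD] at this
      simp [Multiset.mem_replicate] at this
      tauto
    set S := ∑ i, z i with hS
    have hSk : ∃ k : ℕ, k ≤ n ∧ S = (k : ℝ) := by
      refine ⟨(Finset.univ.filter (fun i => z i = 1)).card, le_trans (Finset.card_filter_le _ _) (by simp), ?_⟩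
      rw [hS, ← Finset.sum_boole]
      apply Finset.sum_congr rfl
      intro i _
      rcases hz' i with h | h <;> simp [h]
    obtain ⟨k, hk, hSeq⟩ := hSk
    have hkk : (0:ℝ) ≤ (k:ℝ) * ((k:ℝ) - 1) := by
      rcases Nat.eq_zero_or_pos k with h | h
      · simp [h]
      · have : (1:ℝ) ≤ (k:ℝ) := by exact_mod_cast h
        nlinarith
    have hne : (2*(n:ℝ)-1) ≠ 0 := by linarith
    rw [hL', hm, hSeq]
    rw [show (2*(n:ℝ)/(2*(n:ℝ)-1)) * ((2*(n:ℝ)-1)/(2*(n:ℝ))^2) = 1/(2*(n:ℝ)) by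
      field_simp]
    rw [div_le_div_iff₀ (by positivity) (by positivity)]
    have hfield : ((k:ℝ)/n)^2 * n^2 = (k:ℝ)^2 := by field_simp
    have hfield2 : ((k:ℝ)/n) * n = (k:ℝ) := by field_simp
    nlinarith [hkk, hn1, hnpos, mul_nonneg hnpos.le hkk, hfield, hfield2,
      mul_pos hnpos hnpos]
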